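/- Fix an integer m ≥ 2, let f_m(x) = 2·T_m(x/2) be the generalised logistic map of degree m, and let μ be the measure on ℝ with density D(x) = 1/(π·√(4−x²)) for −2 < x < 2 and D(x) = 0 otherwise, with respect to Lebesgue measure. Then μ is invariant under f_m: the pushforward measure (f_m)_*μ equals μ. -/

import Mathlib

open MeasureTheory

/-- The generalised logistic map of degree `m`: `f_m(x) = 2·T_m(x/2)`, where `T_m`
is the `m`-th Chebyshev polynomial of the first kind. -/
noncomputable def genLogistic (m : ℕ) (x : ℝ) : ℝ :=
  2 * (Polynomial.Chebyshev.T ℝ (m : ℤ)).eval (x / 2)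

/-- The common invariant density `D(x) = 1/(π·√(4−x²))` on `(−2,2)`. -/
noncomputable def dosDensity (x : ℝ) : ℝ :=
  if -2 < x ∧ x < 2 then 1 / (Real.pi * Real.sqrt (4 - x ^ 2)) else 0

open Set Real
open scoped ENNReal

namespace GenLogisticAux

/-- Pushforward of a measure with a composed density. -/
lemma map_withDensity_comp {α β : Type*} [MeasurableSpace α] [MeasurableSpace β]
    (μ : Measure α) {g : α → β} (hg : Measurable g) {h : β → ℝ≥0∞} (hh : Measurable h) :
    Measure.map g (μ.withDensity (fun x => h (g x))) = (Measure.map g μ).withDensity h := by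
  ext s hs
  rw [Measure.map_apply hg hs, withDensity_apply _ (hg hs), withDensity_apply _ hs,
    setLIntegral_map hs hh hg]

lemma measurable_dd : Measurable (fun x : ℝ => ENNReal.ofReal (dosDensity x)) := by
  unfold dosDensity
  refine ENNReal.measurable_ofReal.comp (Measurable.ite ?_ (by fun_prop) measurable_const)
  rw [show (fun x : ℝ => -2 < x ∧ x < 2) = fun x => x ∈ Set.Ioo (-2:ℝ) 2 from by ext x; simp]
  exact measurableSet_Ioo

lemma measurable_g : Measurable (fun θ : ℝ => 2 * Real.cos θ) := by fun_prop

/-- The density measure is the pushforward of the normalised Lebesgue measure on `[0, π]`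
under `θ ↦ 2 cos θ`. -/
lemma keyA : volume.withDensity (fun x => ENNReal.ofReal (dosDensity x))
    = Measure.map (fun θ : ℝ => 2 * Real.cos θ)
        (ENNReal.ofReal π⁻¹ • volume.restrict (Icc 0 π)) := by
  have hπ := Real.pi_pos
  set g : ℝ → ℝ := fun θ => 2 * Real.cos θ with hgdef
  have hg : Measurable g := measurable_g
  have hderiv : ∀ θ ∈ Icc (0:ℝ) π,
      HasFDerivWithinAt g ((1 : ℝ →L[ℝ] ℝ).smulRight (-2 * Real.sin θ)) (Icc 0 π) θ := by
    intro θ _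
    have h1 : HasDerivAt g (-2 * Real.sin θ) θ := by
      have := (Real.hasDerivAt_cos θ).const_mul 2
      rw [show -2 * Real.sin θ = 2 * -Real.sin θ by ring]; exact this
    exact h1.hasDerivWithinAt.hasFDerivWithinAt
  have hinj : InjOn g (Icc 0 π) := by
    intro a ha b hb hab
    exact Real.injOn_cos ha hb (by simp only [hgdef] at hab; linarith)
  have himg : g '' Icc 0 π = Icc (-2 : ℝ) 2 := by
    have h1 : g = (fun y : ℝ => 2 * y) ∘ Real.cos := rfl
    rw [h1, image_comp, Real.bijOn_cos.image_eq]
    ext x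
    constructor
    · rintro ⟨y, hy, rfl⟩
      simp only [Set.mem_Icc] at hy ⊢
      constructor <;> linarith [hy.1, hy.2]
    · intro hx
      simp only [Set.mem_Icc] at hx
      exact ⟨x / 2, ⟨by linarith [hx.1], by linarith [hx.2]⟩, by ring⟩
  have J := map_withDensity_abs_det_fderiv_eq_addHaar volume measurableSet_Icc.nullMeasurableSet hderiv hinj
  simp only [ContinuousLinearMap.smulRight_one_eq_toSpanSingleton, ContinuousLinearMap.det_toSpanSingleton] at J
  rw [himg] at J
  set jac : ℝ → ℝ≥0∞ := fun θ => ENNReal.ofReal |(-2) * Real.sin θ| with hjacdef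
  have hjac : Measurable jac := by fun_prop
  have hDg : Measurable (fun θ : ℝ => ENNReal.ofReal (dosDensity (g θ))) :=
    measurable_dd.comp hg
  have hDD : (fun x : ℝ => ENNReal.ofReal (dosDensity x))
      = Set.indicator (Icc (-2:ℝ) 2) (fun x => ENNReal.ofReal (dosDensity x)) := by
    funext x
    by_cases hx : x ∈ Icc (-2:ℝ) 2
    · rw [Set.indicator_of_mem hx]
    · rw [Set.indicator_of_notMem hx]
      simp only [Set.mem_Icc, not_and_or, not_le] at hx
      have : ¬(-2 < x ∧ x < 2) := by
        rcases hx with h | h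
        · intro hc; linarith [hc.1]
        · intro hc; linarith [hc.2]
      simp [dosDensity, this]
  calc volume.withDensity (fun x => ENNReal.ofReal (dosDensity x))
      = (volume.restrict (Icc (-2:ℝ) 2)).withDensity (fun x => ENNReal.ofReal (dosDensity x)) := by
        conv_lhs => rw [hDD]
        rw [withDensity_indicator measurableSet_Icc]
    _ = (Measure.map g ((volume.restrict (Icc 0 π)).withDensity jac)).withDensity
          (fun x => ENNReal.ofReal (dosDensity x)) := by rw [J]
    _ = Measure.map g (((volume.restrict (Icc 0 π)).withDensity jac).withDensity
          (fun θ => ENNReal.ofReal (dosDensity (g θ)))) :=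
        (map_withDensity_comp _ hg measurable_dd).symm
    _ = Measure.map g ((volume.restrict (Icc 0 π)).withDensity
          (fun θ => jac θ * ENNReal.ofReal (dosDensity (g θ)))) := by
        rw [show (fun θ : ℝ => jac θ * ENNReal.ofReal (dosDensity (g θ)))
            = jac * (fun θ => ENNReal.ofReal (dosDensity (g θ))) from rfl,
          withDensity_mul _ hjac hDg]
    _ = Measure.map g ((volume.restrict (Icc 0 π)).withDensity
          (fun _ => ENNReal.ofReal π⁻¹)) := by
        congr 1
        apply withDensity_congr_ae
        rw [show volume.restrict (Icc (0:ℝ) π) = volume.restrict (Ioo 0 π) from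
          (Measure.restrict_congr_set Ioo_ae_eq_Icc).symm]
        filter_upwards [ae_restrict_mem measurableSet_Ioo] with θ hθ
        have hs : 0 < Real.sin θ := Real.sin_pos_of_pos_of_lt_pi hθ.1 hθ.2
        have hsc := Real.sin_sq_add_cos_sq θ
        have hc2 : Real.cos θ ^ 2 < 1 := by nlinarith
        have hc1 : -1 < Real.cos θ := by nlinarith
        have hc1' : Real.cos θ < 1 := by nlinarith
        have habs : |(-2) * Real.sin θ| = 2 * Real.sin θ := by
          rw [abs_of_nonpos (by nlinarith)]; ring
        have hcond : (-2:ℝ) < 2 * Real.cos θ ∧ 2 * Real.cos θ < 2 := ⟨by linarith, by linarith⟩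
        have hsqrt : Real.sqrt (4 - (2 * Real.cos θ) ^ 2) = 2 * Real.sin θ := by
          rw [show 4 - (2 * Real.cos θ) ^ 2 = (2 * Real.sin θ) ^ 2 by nlinarith]
          exact Real.sqrt_sq (by positivity)
        simp only [hjacdef, hgdef, dosDensity, if_pos hcond, hsqrt, habs]
        rw [← ENNReal.ofReal_mul (by positivity)]
        congr 1
        field_simp
    _ = Measure.map g (ENNReal.ofReal π⁻¹ • volume.restrict (Icc 0 π)) := by
        rw [withDensity_const]

/-- Reflection symmetry: pushing forward by `-2 cos` gives the same measure as `2 cos`. -/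
lemma neg_map_eq : Measure.map (fun t : ℝ => -(2 * Real.cos t)) (volume.restrict (Ioc 0 π))
    = Measure.map (fun t : ℝ => 2 * Real.cos t) (volume.restrict (Ioc 0 π)) := by
  have hσ : MeasurePreserving (fun t : ℝ => π - t) volume volume := by
    have h := (measurePreserving_add_right (volume : Measure ℝ) π).comp
      (Measure.measurePreserving_neg (volume : Measure ℝ))
    have he : (fun t : ℝ => π - t) = (fun x : ℝ => x + π) ∘ Neg.neg := by
      funext t
      simp only [Function.comp_apply]
      ring
    rwa [he]
  have hpre : (fun t : ℝ => π - t) ⁻¹' (Ioc 0 π) = Ico 0 π := by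
    ext t
    simp only [Set.mem_preimage, Set.mem_Ioc, Set.mem_Ico]
    constructor <;> intro h <;> exact ⟨by linarith [h.1, h.2], by linarith [h.1, h.2]⟩
  have h1 : volume.restrict (Ioc (0:ℝ) π)
      = Measure.map (fun t : ℝ => π - t) (volume.restrict (Ico 0 π)) := by
    rw [show volume.restrict (Ico (0:ℝ) π)
        = volume.restrict ((fun t : ℝ => π - t) ⁻¹' (Ioc 0 π)) from by rw [hpre]]
    rw [← Measure.restrict_map hσ.measurable measurableSet_Ioc, hσ.map_eq]
  symm
  calc Measure.map (fun t : ℝ => 2 * Real.cos t) (volume.restrict (Ioc 0 π))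
      = Measure.map (fun t : ℝ => 2 * Real.cos t)
          (Measure.map (fun t : ℝ => π - t) (volume.restrict (Ico 0 π))) := by rw [← h1]
    _ = Measure.map ((fun t : ℝ => 2 * Real.cos t) ∘ (fun t : ℝ => π - t))
          (volume.restrict (Ico 0 π)) := Measure.map_map measurable_g hσ.measurable
    _ = Measure.map (fun t : ℝ => -(2 * Real.cos t)) (volume.restrict (Ico 0 π)) := by
        congr 1
        funext t
        simp [Function.comp, Real.cos_pi_sub]
    _ = Measure.map (fun t : ℝ => -(2 * Real.cos t)) (volume.restrict (Ioc 0 π)) := by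
        rw [Measure.restrict_congr_set Ico_ae_eq_Ioc]

/-- Each period interval pushes forward to the same measure. -/
lemma shift_map_eq (k : ℕ) :
    Measure.map (fun θ : ℝ => 2 * Real.cos θ)
        (volume.restrict (Ioc ((k:ℝ) * π) (((k:ℝ) + 1) * π)))
      = Measure.map (fun θ : ℝ => 2 * Real.cos θ) (volume.restrict (Ioc 0 π)) := by
  have hτ : MeasurePreserving (fun t : ℝ => t + (k:ℝ) * π) volume volume :=
    measurePreserving_add_right volume _
  have hpre : (fun t : ℝ => t + (k:ℝ) * π) ⁻¹' (Ioc ((k:ℝ) * π) (((k:ℝ) + 1) * π))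
      = Ioc 0 π := by
    ext t
    simp only [Set.mem_preimage, Set.mem_Ioc]
    constructor <;> intro h <;> exact ⟨by nlinarith [h.1, h.2], by nlinarith [h.1, h.2]⟩
  have h1 : volume.restrict (Ioc ((k:ℝ) * π) (((k:ℝ) + 1) * π))
      = Measure.map (fun t : ℝ => t + (k:ℝ) * π) (volume.restrict (Ioc 0 π)) := by
    rw [show volume.restrict (Ioc (0:ℝ) π)
        = volume.restrict ((fun t : ℝ => t + (k:ℝ) * π) ⁻¹' (Ioc ((k:ℝ) * π) (((k:ℝ) + 1) * π)))
        from by rw [hpre]]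
    rw [← Measure.restrict_map hτ.measurable measurableSet_Ioc, hτ.map_eq]
  rw [h1, Measure.map_map measurable_g hτ.measurable]
  have hcomp : (fun θ : ℝ => 2 * Real.cos θ) ∘ (fun t : ℝ => t + (k:ℝ) * π)
      = fun t : ℝ => (-1:ℝ)^k * (2 * Real.cos t) := by
    funext t
    simp only [Function.comp, Real.cos_add_nat_mul_pi]
    ring
  rw [hcomp]
  rcases Nat.even_or_odd k with hk | hk
  · rw [hk.neg_one_pow]
    simp only [one_mul]
  · rw [hk.neg_one_pow]
    simp only [neg_one_mul]
    exact neg_map_eq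

/-- Folding: the image measure of `[0, nπ]` is `n` copies of that of `[0, π]`. -/
lemma sum_map (n : ℕ) :
    Measure.map (fun θ : ℝ => 2 * Real.cos θ) (volume.restrict (Ioc 0 ((n:ℝ) * π)))
      = n • Measure.map (fun θ : ℝ => 2 * Real.cos θ) (volume.restrict (Ioc 0 π)) := by
  have hπ := Real.pi_pos
  induction n with
  | zero => simp
  | succ n ih =>
    have hunion : Ioc (0:ℝ) (((n:ℝ) + 1) * π)
        = Ioc 0 ((n:ℝ) * π) ∪ Ioc ((n:ℝ) * π) (((n:ℝ) + 1) * π) :=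
      (Ioc_union_Ioc_eq_Ioc (by positivity) (by nlinarith)).symm
    push_cast
    rw [hunion, Measure.restrict_union (Ioc_disjoint_Ioc_of_le le_rfl) measurableSet_Ioc,
      Measure.map_add _ _ measurable_g, ih, shift_map_eq n, succ_nsmul]

end GenLogisticAux

open GenLogisticAux

/-- For `m ≥ 2`, the measure with density `D(x) = 1/(π·√(4−x²))` on
`(−2,2)` is invariant under the generalised logistic map `f_m`: `(f_m)_* μ = μ`. -/
theorem genLogistic_measure_invariant (m : ℕ) (hm : 2 ≤ m) :
    (volume.withDensity (fun x => ENNReal.ofReal (dosDensity x))).map (genLogistic m)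
      = volume.withDensity (fun x => ENNReal.ofReal (dosDensity x)) := by
  have hπ := Real.pi_pos
  have hmpos : (0:ℝ) < (m:ℝ) := Nat.cast_pos.mpr (by omega)
  have hm0 : (m:ℝ) ≠ 0 := ne_of_gt hmpos
  have hfm : Measurable (genLogistic m) := by
    have : Continuous (genLogistic m) := by
      unfold genLogistic
      exact continuous_const.mul
        ((Polynomial.continuous _).comp (continuous_id.div_const 2))
    exact this.measurable
  rw [keyA, Measure.map_map hfm measurable_g]
  have hcomp : genLogistic m ∘ (fun θ : ℝ => 2 * Real.cos θ)
      = (fun θ : ℝ => 2 * Real.cos θ) ∘ (fun θ : ℝ => (m:ℝ) * θ) := by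
    funext θ
    simp only [Function.comp, genLogistic]
    rw [show (2 * Real.cos θ) / 2 = Real.cos θ from by ring,
      Polynomial.Chebyshev.T_real_cos]
    norm_num
  rw [hcomp, ← Measure.map_map measurable_g (measurable_const_mul _)]
  have hpre : (fun θ : ℝ => (m:ℝ) * θ) ⁻¹' (Icc 0 ((m:ℝ) * π)) = Icc 0 π := by
    ext t
    simp only [Set.mem_preimage, Set.mem_Icc]
    constructor <;> intro h
    · constructor
      · nlinarith [h.1]
      · nlinarith [h.2]
    · exact ⟨by nlinarith [h.1], by nlinarith [h.2]⟩
  have hmapmul : Measure.map (fun θ : ℝ => (m:ℝ) * θ) (volume.restrict (Icc 0 π))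
      = ENNReal.ofReal ((m:ℝ))⁻¹ • volume.restrict (Icc 0 ((m:ℝ) * π)) := by
    rw [show volume.restrict (Icc (0:ℝ) π)
        = volume.restrict ((fun θ : ℝ => (m:ℝ) * θ) ⁻¹' (Icc 0 ((m:ℝ) * π))) from by rw [hpre],
      ← Measure.restrict_map (measurable_const_mul _) measurableSet_Icc,
      Real.map_volume_mul_left hm0]
    rw [Measure.restrict_smul]
    congr 1
    rw [abs_of_nonneg (by positivity)]
  rw [Measure.map_smul, hmapmul, Measure.map_smul, Measure.map_smul]
  rw [show volume.restrict (Icc (0:ℝ) ((m:ℝ) * π)) = volume.restrict (Ioc 0 ((m:ℝ) * π)) from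
      (Measure.restrict_congr_set Ioc_ae_eq_Icc).symm,
    show volume.restrict (Icc (0:ℝ) π) = volume.restrict (Ioc 0 π) from
      (Measure.restrict_congr_set Ioc_ae_eq_Icc).symm,
    sum_map m, Measure.map_smul]
  rw [← Nat.cast_smul_eq_nsmul ℝ≥0∞ m, smul_smul, smul_smul, mul_assoc]
  rw [show ENNReal.ofReal ((m:ℝ))⁻¹ * (m : ℝ≥0∞) = 1 from by
    rw [ENNReal.ofReal_inv_of_pos hmpos, ENNReal.ofReal_natCast]
    exact ENNReal.inv_mul_cancel (by exact_mod_cast hm0) (ENNReal.natCast_ne_top m)]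
  rw [mul_one]
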